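/- Let μ₁, μ₂ ∈ ℝ and let X and Y be independent real random variables with X distributed according to the Gaussian measure with mean μ₁ and variance 1/2 and Y distributed according to the Gaussian measure with mean μ₂ and variance 1/2. Then E[ X · sgn(Y) ] = μ₁ · Φ(μ₂). -/

import Mathlib

open MeasureTheory ProbabilityTheory
open scoped NNReal

/-- The error function `Φ(x) = (2/√π) ∫₀ˣ exp(−t²) dt`. -/
noncomputable def erf (x : ℝ) : ℝ :=
  2 / Real.sqrt Real.pi * ∫ t in (0 : ℝ)..x, Real.exp (-t ^ 2)

lemma aux_integral_gaussianReal (μ : ℝ) {v : ℝ≥0} (hv : v ≠ 0) (f : ℝ → ℝ) :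
    ∫ x, f x ∂gaussianReal μ v = ∫ x, gaussianPDFReal μ v x * f x := by
  rw [gaussianReal_of_var_ne_zero _ hv]
  have h : gaussianPDF μ v
      = fun x => ((Real.toNNReal (gaussianPDFReal μ v x) : ℝ≥0) : ENNReal) := by
    funext x
    rw [gaussianPDF, ENNReal.ofReal]
  rw [h, integral_withDensity_eq_integral_smul
    ((measurable_gaussianPDFReal μ v).real_toNNReal) f]
  refine integral_congr_ae (Filter.Eventually.of_forall fun x => ?_)
  show (gaussianPDFReal μ v x).toNNReal • f x = gaussianPDFReal μ v x * f x
  rw [NNReal.smul_def, smul_eq_mul, Real.coe_toNNReal _ (gaussianPDFReal_nonneg μ v x)]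

lemma aux_pdf_half (μ x : ℝ) :
    gaussianPDFReal μ (1/2) x = (Real.sqrt Real.pi)⁻¹ * Real.exp (-(x - μ)^2) := by
  rw [gaussianPDFReal]
  norm_num
  rw [mul_comm (Real.sqrt Real.pi)⁻¹, ← mul_assoc,
    mul_inv_cancel₀ (by positivity : Real.sqrt 2 ≠ 0), one_mul]

lemma aux_h_integrable : Integrable (fun t : ℝ => (Real.sqrt Real.pi)⁻¹ * Real.exp (-t^2)) := by
  have := (integrable_exp_neg_mul_sq (by norm_num : (0:ℝ) < 1)).const_mul
    (Real.sqrt Real.pi)⁻¹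
  simpa using this

lemma aux_h_total : ∫ t : ℝ, (Real.sqrt Real.pi)⁻¹ * Real.exp (-t^2) = 1 := by
  rw [integral_const_mul]
  have h1 : ∫ t : ℝ, Real.exp (-t^2) = Real.sqrt Real.pi := by
    have := integral_gaussian 1
    simpa using this
  rw [h1, inv_mul_cancel₀ (by positivity : Real.sqrt Real.pi ≠ 0)]

lemma aux_h_Ioi : ∫ t in Set.Ioi (0:ℝ), (Real.sqrt Real.pi)⁻¹ * Real.exp (-t^2) = 1/2 := by
  rw [integral_const_mul]
  have h1 : ∫ t in Set.Ioi (0:ℝ), Real.exp (-t^2) = Real.sqrt Real.pi / 2 := by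
    have := integral_gaussian_Ioi 1
    simpa using this
  rw [h1]
  field_simp

lemma aux_mean (μ : ℝ) : ∫ x, x ∂gaussianReal μ (1/2) = μ := by
  rw [aux_integral_gaussianReal μ (by norm_num) _]
  simp_rw [aux_pdf_half]
  have hshift := MeasureTheory.integral_add_right_eq_self
    (μ := volume) (fun x : ℝ => (Real.sqrt Real.pi)⁻¹ * Real.exp (-(x - μ)^2) * x) μ
  rw [← hshift]
  have heq : ∀ x : ℝ, (Real.sqrt Real.pi)⁻¹ * Real.exp (-(x + μ - μ)^2) * (x + μ)
      = (Real.sqrt Real.pi)⁻¹ * (x * Real.exp (-1 * x^2))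
        + μ * ((Real.sqrt Real.pi)⁻¹ * Real.exp (-x^2)) := by
    intro x; ring_nf
  simp_rw [heq]
  rw [integral_add (((integrable_mul_exp_neg_mul_sq (by norm_num : (0:ℝ) < 1)).const_mul
      _)) (aux_h_integrable.const_mul μ)]
  have hodd : ∫ x : ℝ, x * Real.exp (-1 * x^2) = 0 := by
    have h1 := MeasureTheory.integral_neg_eq_self (μ := volume)
      (fun x : ℝ => x * Real.exp (-1 * x^2))
    have h2 : ∀ x : ℝ, (fun x : ℝ => x * Real.exp (-1 * x^2)) (-x)
        = -(x * Real.exp (-1 * x^2)) := by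
      intro x; simp only [neg_sq]; ring
    simp_rw [h2, integral_neg] at h1
    linarith
  rw [integral_const_mul, hodd, integral_const_mul, aux_h_total]
  ring

lemma aux_shift (μ : ℝ) : ∫ x in Set.Ioi (0:ℝ), (Real.sqrt Real.pi)⁻¹ * Real.exp (-(x - μ)^2)
    = ∫ t in Set.Ioi (-μ), (Real.sqrt Real.pi)⁻¹ * Real.exp (-t^2) := by
  have hmap : Measure.map (fun x : ℝ => x + μ) volume = volume :=
    map_add_right_eq_self volume μ
  have h := MeasureTheory.setIntegral_map (μ := volume)
    (g := fun x : ℝ => x + μ)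
    (f := fun x : ℝ => (Real.sqrt Real.pi)⁻¹ * Real.exp (-(x - μ)^2))
    (s := Set.Ioi (0:ℝ)) measurableSet_Ioi ?_ ?_
  · rw [hmap] at h
    rw [h]
    have hpre : (fun x : ℝ => x + μ) ⁻¹' Set.Ioi (0:ℝ) = Set.Ioi (-μ) := by
      ext x
      simp only [Set.mem_preimage, Set.mem_Ioi]
      constructor <;> intro hx <;> linarith
    rw [hpre]
    congr 1; ext x; ring_nf
  · rw [hmap]
    exact ((by fun_prop : Continuous fun x : ℝ =>
      (Real.sqrt Real.pi)⁻¹ * Real.exp (-(x - μ)^2))).aestronglyMeasurable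
  · exact (measurable_add_const μ).aemeasurable

lemma aux_sign (μ : ℝ) : ∫ y, Real.sign y ∂gaussianReal μ (1/2) = erf μ := by
  set ν := gaussianReal μ (1/2) with hν
  set h : ℝ → ℝ := fun t => (Real.sqrt Real.pi)⁻¹ * Real.exp (-t^2) with hh
  -- split sign into indicators
  have hsgn : ∀ y : ℝ, Real.sign y
      = Set.indicator (Set.Ioi (0:ℝ)) (fun _ => (1:ℝ)) y
        - Set.indicator (Set.Iio (0:ℝ)) (fun _ => (1:ℝ)) y := by
    intro y
    rcases lt_trichotomy y 0 with hy | hy | hy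
    · rw [Real.sign_of_neg hy, Set.indicator_of_notMem (by simp [hy.not_gt] : y ∉ Set.Ioi 0),
        Set.indicator_of_mem (Set.mem_Iio.2 hy)]; norm_num
    · subst hy; simp [Real.sign_zero]
    · rw [Real.sign_of_pos hy, Set.indicator_of_mem (Set.mem_Ioi.2 hy),
        Set.indicator_of_notMem (by simp [hy.not_gt] : y ∉ Set.Iio 0)]; norm_num
  simp_rw [hsgn]
  have hint1 : Integrable (Set.indicator (Set.Ioi (0:ℝ)) (fun _ => (1:ℝ))) ν :=
    (integrable_const (1:ℝ)).indicator measurableSet_Ioi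
  have hint2 : Integrable (Set.indicator (Set.Iio (0:ℝ)) (fun _ => (1:ℝ))) ν :=
    (integrable_const (1:ℝ)).indicator measurableSet_Iio
  rw [integral_sub hint1 hint2, integral_indicator_const (1:ℝ) measurableSet_Ioi,
    integral_indicator_const (1:ℝ) measurableSet_Iio]
  have h2 : (2:ℝ≥0) ≠ 0 := by norm_num
  have hv : (1/2 : ℝ≥0) ≠ 0 := by norm_num
  have happ : ∀ s : Set ℝ, ν s = ENNReal.ofReal (∫ x in s, gaussianPDFReal μ (1/2) x) :=
    fun s => gaussianReal_apply_eq_integral μ hv s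
  have hIoi : (ν (Set.Ioi 0)).toReal = ∫ x in Set.Ioi (0:ℝ), h (x - μ) := by
    rw [happ, ENNReal.toReal_ofReal (by
      apply setIntegral_nonneg measurableSet_Ioi
      intro x _; exact gaussianPDFReal_nonneg _ _ _)]
    refine setIntegral_congr_fun measurableSet_Ioi fun x _ => ?_
    rw [aux_pdf_half]
  have hIio : (ν (Set.Iio 0)).toReal = ∫ x in Set.Iio (0:ℝ), h (x - μ) := by
    rw [happ, ENNReal.toReal_ofReal (by
      apply setIntegral_nonneg measurableSet_Iio
      intro x _; exact gaussianPDFReal_nonneg _ _ _)]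
    refine setIntegral_congr_fun measurableSet_Iio fun x _ => ?_
    rw [aux_pdf_half]
  rw [smul_eq_mul, smul_eq_mul, mul_one, mul_one, measureReal_def, measureReal_def, hIoi, hIio]
  -- the shifted gaussian is integrable
  have hgint : Integrable (fun x : ℝ => h (x - μ)) := by
    have := aux_h_integrable.comp_sub_right μ
    simpa [hh] using this
  -- total integral is 1
  have htot : ∫ x : ℝ, h (x - μ) = 1 := by
    rw [MeasureTheory.integral_sub_right_eq_self (fun t : ℝ => h t) μ]
    exact aux_h_total
  -- P + Q' = 1 where Q' over Iic
  have hIicIoi : (∫ x in Set.Iic (0:ℝ), h (x - μ)) + (∫ x in Set.Ioi (0:ℝ), h (x - μ)) = 1 := by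
    rw [intervalIntegral.integral_Iic_add_Ioi hgint.integrableOn hgint.integrableOn, htot]
  -- Iio = Iic
  have hIioIic : (∫ x in Set.Iio (0:ℝ), h (x - μ)) = ∫ x in Set.Iic (0:ℝ), h (x - μ) := by
    rw [← MeasureTheory.integral_Iic_eq_integral_Iio]
  -- compute P
  have hP : (∫ x in Set.Ioi (0:ℝ), h (x - μ))
      = (∫ t in (-μ)..0, h t) + 1/2 := by
    have hs := aux_shift μ
    have hsplit : (∫ t in Set.Iic (-μ), h t) + (∫ t in Set.Ioi (-μ), h t) = 1 := by
      rw [intervalIntegral.integral_Iic_add_Ioi aux_h_integrable.integrableOn aux_h_integrable.integrableOn,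
        aux_h_total]
    have hsplit0 : (∫ t in Set.Iic (0:ℝ), h t) + (∫ t in Set.Ioi (0:ℝ), h t) = 1 := by
      rw [intervalIntegral.integral_Iic_add_Ioi aux_h_integrable.integrableOn aux_h_integrable.integrableOn,
        aux_h_total]
    have hIicdiff := intervalIntegral.integral_Iic_sub_Iic (μ := volume) (f := h)
      (a := -μ) (b := 0) aux_h_integrable.integrableOn aux_h_integrable.integrableOn
    have hIoi0 : (∫ t in Set.Ioi (0:ℝ), h t) = 1/2 := aux_h_Ioi
    have : (∫ x in Set.Ioi (0:ℝ), h (x - μ)) = ∫ t in Set.Ioi (-μ), h t := hs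
    rw [this]
    have hIoineg : (∫ t in Set.Ioi (-μ), h t)
        = 1 - (∫ t in Set.Iic (-μ), h t) := by linarith
    rw [hIoineg]
    have hIicneg : (∫ t in Set.Iic (-μ), h t)
        = (∫ t in Set.Iic (0:ℝ), h t) - ∫ t in (-μ)..0, h t := by linarith
    rw [hIicneg]
    have hIic0 : (∫ t in Set.Iic (0:ℝ), h t) = 1/2 := by linarith
    rw [hIic0]; ring
  -- symmetry of the interval integral
  have hsym : (∫ t in (-μ)..0, h t) = ∫ t in (0:ℝ)..μ, Real.exp (-t^2) / Real.sqrt Real.pi := by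
    have hneg := intervalIntegral.integral_comp_neg (a := (0:ℝ)) (b := μ) h
    simp only [neg_zero] at hneg
    rw [← hneg]
    refine intervalIntegral.integral_congr fun t _ => ?_
    simp [hh, neg_sq]
    ring
  rw [hIioIic]
  have hQ : (∫ x in Set.Iic (0:ℝ), h (x - μ)) = 1 - ((∫ t in (-μ)..0, h t) + 1/2) := by
    rw [← hP]; linarith
  rw [hP, hQ, hsym]
  rw [erf]
  rw [intervalIntegral.integral_div]
  field_simp
  ring

/-- If `X ~ N(μ₁, 1/2)` and `Y ~ N(μ₂, 1/2)` are independent, then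
`E[X · sgn Y] = μ₁ · Φ(μ₂)`. -/
theorem expectation_self_mul_sign_indep_gaussian (μ₁ μ₂ : ℝ) :
    ∫ p : ℝ × ℝ, p.1 * Real.sign p.2
        ∂((gaussianReal μ₁ (1 / 2)).prod (gaussianReal μ₂ (1 / 2))) =
      μ₁ * erf μ₂ := by
  rw [integral_prod_mul (fun x : ℝ => x) (fun y : ℝ => Real.sign y)]
  rw [aux_mean μ₁, aux_sign μ₂]
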